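/- arXiv:2602.03718 — 2 statements merged into one kernel-verified Lean document; each statement's English description precedes it below -/
import Mathlib

section
/- Phase-offset formula: for N = 2^L and the balanced binary-tree magnitude network with arbitrary split angles, the vector y = V_mag(α) e₁ satisfies y_n = |y_n| · e^{i (π/2) w_n} for each n with y_n ≠ 0, where w_n is the Hamming weight of the L-bit binary representation of n − 1. Equivalently, i^{−w_n} y_n is a nonnegative real number for every n. -/
open Matrix Complex

/-- Embedded 2×2 splitter: identity on `ℂ^N` except on the (0-based) rows/columns
`{m, n}`, where the principal 2×2 block is `[[cos α, i sin α], [i sin α, cos α]]`. -/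
noncomputable def UsubN (N m n : ℕ) (α : ℝ) : Matrix (Fin N) (Fin N) ℂ :=
  Matrix.of fun u v =>
    if ((u : ℕ) = m ∧ (v : ℕ) = m) ∨ ((u : ℕ) = n ∧ (v : ℕ) = n) then (Real.cos α : ℂ)
    else if ((u : ℕ) = m ∧ (v : ℕ) = n) ∨ ((u : ℕ) = n ∧ (v : ℕ) = m) then
      Complex.I * Real.sin α
    else if u = v then 1 else 0

/-- 0-based entry index of node `(ℓ, i)` (with 1-based `ℓ, i`):
`p(ℓ,i) − 1 = (i−1)·2^{L−ℓ+1}`. -/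
def pIdx (L ℓ i : ℕ) : ℕ := (i - 1) * 2 ^ (L + 1 - ℓ)

/-- 0-based split-partner index of node `(ℓ, i)`: `q(ℓ,i) − 1 = p(ℓ,i) − 1 + 2^{L−ℓ}`. -/
def qIdx (L ℓ i : ℕ) : ℕ := pIdx L ℓ i + 2 ^ (L - ℓ)

/-- Layer matrix `U_ℓ`: the (commuting) product over `i = 1,…,2^{ℓ−1}` of the embedded
splitters `U_{p(ℓ,i), q(ℓ,i)}(α_{ℓ,i})`. -/
noncomputable def layerU (L : ℕ) (α : ℕ → ℕ → ℝ) (ℓ : ℕ) :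
    Matrix (Fin (2 ^ L)) (Fin (2 ^ L)) ℂ :=
  (List.ofFn fun i : Fin (2 ^ (ℓ - 1)) =>
    UsubN (2 ^ L) (pIdx L ℓ ((i : ℕ) + 1)) (qIdx L ℓ ((i : ℕ) + 1)) (α ℓ ((i : ℕ) + 1))).prod

/-- Magnitude-tree unitary `V_mag(α) = U_L · U_{L−1} ⋯ U_1`. -/
noncomputable def Vmag (L : ℕ) (α : ℕ → ℕ → ℝ) :
    Matrix (Fin (2 ^ L)) (Fin (2 ^ L)) ℂ :=
  (List.ofFn fun ℓ : Fin L => layerU L α (L - (ℓ : ℕ))).prod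

/-- First standard basis vector `e₁` of `ℂ^N` (0-based index `0`). -/
def e1 (N : ℕ) : Fin N → ℂ := fun j => if (j : ℕ) = 0 then 1 else 0



lemma UsubN_mulVec {N : ℕ} {m n : ℕ} (hm : m < N) (hn : n < N) (hmn : m ≠ n) (α : ℝ)
    (x : Fin N → ℂ) (u : Fin N) :
    (UsubN N m n α).mulVec x u =
      if (u : ℕ) = m then (Real.cos α : ℂ) * x ⟨m, hm⟩ + Complex.I * Real.sin α * x ⟨n, hn⟩
      else if (u : ℕ) = n then Complex.I * Real.sin α * x ⟨m, hm⟩ + (Real.cos α : ℂ) * x ⟨n, hn⟩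
      else x u := by
  classical
  rw [Matrix.mulVec]
  by_cases hu : (u : ℕ) = m
  · have : ∀ v : Fin N, UsubN N m n α u v * x v =
        (if v = ⟨m, hm⟩ then (Real.cos α : ℂ) * x ⟨m, hm⟩ else 0)
        + (if v = ⟨n, hn⟩ then Complex.I * Real.sin α * x ⟨n, hn⟩ else 0) := by
      intro v
      by_cases h1 : v = ⟨m, hm⟩
      · subst h1; simp [UsubN, hu, hmn]
      · by_cases h2 : v = ⟨n, hn⟩
        · subst h2; simp [UsubN, hu, hmn, Ne.symm hmn]
        · have hv1 : (v : ℕ) ≠ m := fun h => h1 (Fin.ext h)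
          have hv2 : (v : ℕ) ≠ n := fun h => h2 (Fin.ext h)
          have huv : u ≠ v := fun h => hv1 (h ▸ hu)
          simp [UsubN, hu, hv1, hv2, h1, h2, huv, hmn, Ne.symm huv]
    simp only [dotProduct, this, Finset.sum_add_distrib, Finset.sum_ite_eq', Finset.mem_univ,
      if_pos, hu]
  · by_cases hu2 : (u : ℕ) = n
    · have : ∀ v : Fin N, UsubN N m n α u v * x v =
          (if v = ⟨m, hm⟩ then Complex.I * Real.sin α * x ⟨m, hm⟩ else 0)
          + (if v = ⟨n, hn⟩ then (Real.cos α : ℂ) * x ⟨n, hn⟩ else 0) := by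
        intro v
        by_cases h1 : v = ⟨m, hm⟩
        · subst h1; simp [UsubN, hu, hu2, hmn, Ne.symm hmn]
        · by_cases h2 : v = ⟨n, hn⟩
          · subst h2; simp [UsubN, hu, hu2, Ne.symm hmn]
          · have hv1 : (v : ℕ) ≠ m := fun h => h1 (Fin.ext h)
            have hv2 : (v : ℕ) ≠ n := fun h => h2 (Fin.ext h)
            have huv : u ≠ v := fun h => hv2 (h ▸ hu2)
            simp [UsubN, hu, hv1, hv2, h1, h2, huv, hu2]
      simp only [dotProduct, this, Finset.sum_add_distrib, Finset.sum_ite_eq', Finset.mem_univ,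
        if_pos, hu, hu2]
      simp [Ne.symm hmn]
    · have : ∀ v : Fin N, UsubN N m n α u v * x v = if v = u then x u else 0 := by
        intro v
        by_cases h : v = u
        · subst h; simp [UsubN, hu, hu2]
        · have hvu : u ≠ v := Ne.symm h
          by_cases h1 : (v : ℕ) = m <;> by_cases h2 : (v : ℕ) = n <;>
            simp [UsubN, hu, hu2, h1, h2, hvu, h]
      simp only [dotProduct, this, Finset.sum_ite_eq', Finset.mem_univ, if_pos, hu, hu2]
      simp [hu, hu2]

lemma sumdig_two_mul (a : ℕ) : (Nat.digits 2 (2 * a)).sum = (Nat.digits 2 a).sum := by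
  rcases Nat.eq_zero_or_pos a with h | h
  · simp [h]
  · rw [Nat.digits_def' (by norm_num : 1 < 2) (by omega)]
    simp [Nat.mul_div_cancel_left _ (by norm_num : 0 < 2), Nat.mul_mod_right]

lemma sumdig_two_mul_add_one (a : ℕ) :
    (Nat.digits 2 (2 * a + 1)).sum = (Nat.digits 2 a).sum + 1 := by
  rw [Nat.digits_def' (by norm_num : 1 < 2) (by omega)]
  have h1 : (2 * a + 1) / 2 = a := by omega
  have h2 : (2 * a + 1) % 2 = 1 := by omega
  simp [h1, h2]
  ring

lemma sumdig_step (s m : ℕ) :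
    (Nat.digits 2 (m * 2 ^ (s + 1) + 2 ^ s)).sum = (Nat.digits 2 (m * 2 ^ (s + 1))).sum + 1 := by
  induction s generalizing m with
  | zero =>
    have e1 : m * 2 ^ 1 + 2 ^ 0 = 2 * m + 1 := by ring
    have e2 : m * 2 ^ 1 = 2 * m := by ring
    rw [e1, e2, sumdig_two_mul_add_one, sumdig_two_mul]
  | succ s ih =>
    have e1 : m * 2 ^ (s + 2) + 2 ^ (s + 1) = 2 * (m * 2 ^ (s + 1) + 2 ^ s) := by ring
    have e2 : m * 2 ^ (s + 2) = 2 * (m * 2 ^ (s + 1)) := by ring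
    rw [e1, e2, sumdig_two_mul, ih, sumdig_two_mul]

lemma pq_inj {k a b ε δ : ℕ} (hk : 0 < k) (h : a * (2 * k) + ε * k = b * (2 * k) + δ * k) :
    2 * a + ε = 2 * b + δ := by
  have e1 : a * (2 * k) + ε * k = k * (2 * a + ε) := by ring
  have e2 : b * (2 * k) + δ * k = k * (2 * b + δ) := by ring
  exact Nat.eq_of_mul_eq_mul_left hk (by rw [← e1, ← e2, h])

lemma qIdx_lt (L ℓ i : ℕ) (hℓ : 1 ≤ ℓ) (hLℓ : ℓ ≤ L) (hi1 : 1 ≤ i) (hi2 : i ≤ 2 ^ (ℓ - 1)) :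
    qIdx L ℓ i < 2 ^ L := by
  have hs : L + 1 - ℓ = (L - ℓ) + 1 := by omega
  have hL' : (ℓ - 1) + ((L - ℓ) + 1) = L := by omega
  have hpow : 2 ^ (ℓ - 1) * 2 ^ ((L - ℓ) + 1) = 2 ^ L := by rw [← pow_add, hL']
  unfold qIdx pIdx
  rw [hs]
  have h1 : (i - 1) * 2 ^ ((L - ℓ) + 1) + 2 ^ ((L - ℓ) + 1) ≤ 2 ^ L := by
    have e : (i - 1) * 2 ^ ((L - ℓ) + 1) + 2 ^ ((L - ℓ) + 1) = i * 2 ^ ((L - ℓ) + 1) := by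
      have : i - 1 + 1 = i := by omega
      rw [← Nat.succ_mul]
      rw [Nat.succ_eq_add_one, this]
    rw [e, ← hpow]
    exact Nat.mul_le_mul_right _ hi2
  have h2 : 2 ^ (L - ℓ) < 2 ^ ((L - ℓ) + 1) := by
    have := Nat.pow_lt_pow_right (by norm_num : 1 < 2) (Nat.lt_succ_self (L - ℓ))
    exact this
  omega

lemma pair_disjoint (L ℓ : ℕ) (hLℓ : ℓ ≤ L) {i j : ℕ} (hi : 1 ≤ i) (hj : 1 ≤ j) (hij : i ≠ j) :
    pIdx L ℓ i ≠ pIdx L ℓ j ∧ pIdx L ℓ i ≠ qIdx L ℓ j ∧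
    qIdx L ℓ i ≠ pIdx L ℓ j ∧ qIdx L ℓ i ≠ qIdx L ℓ j := by
  set k := 2 ^ (L - ℓ) with hk
  have hk0 : 0 < k := Nat.pow_pos (by norm_num)
  have hs : L + 1 - ℓ = (L - ℓ) + 1 := by omega
  have hkk : 2 ^ (L + 1 - ℓ) = 2 * k := by rw [hs, pow_succ, hk]; ring
  have hpi : ∀ a : ℕ, pIdx L ℓ a = (a - 1) * (2 * k) := by
    intro a; unfold pIdx; rw [hkk]
  have hqi : ∀ a : ℕ, qIdx L ℓ a = (a - 1) * (2 * k) + 1 * k := by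
    intro a; unfold qIdx; rw [hpi, hk]; ring
  refine ⟨?_, ?_, ?_, ?_⟩
  · intro h
    rw [hpi, hpi] at h
    have := pq_inj hk0 (a := i - 1) (b := j - 1) (ε := 0) (δ := 0) (by simpa using h)
    omega
  · intro h
    rw [hpi, hqi] at h
    have := pq_inj hk0 (a := i - 1) (b := j - 1) (ε := 0) (δ := 1) (by simpa using h)
    omega
  · intro h
    rw [hqi, hpi] at h
    have := pq_inj hk0 (a := i - 1) (b := j - 1) (ε := 1) (δ := 0) (by simpa using h)
    omega
  · intro h
    rw [hqi, hqi] at h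
    have := pq_inj hk0 (a := i - 1) (b := j - 1) (ε := 1) (δ := 1) (by simpa using h)
    omega

def PhaseOK (N : ℕ) (x : Fin N → ℂ) : Prop :=
  ∀ u : Fin N, ∃ t : ℝ, 0 ≤ t ∧ x u = (t : ℂ) * Complex.I ^ ((Nat.digits 2 (u : ℕ)).sum)

lemma layer_list (L ℓ : ℕ) (hℓ : 1 ≤ ℓ) (hLℓ : ℓ ≤ L) (α : ℕ → ℕ → ℝ)
    (hα : ∀ l i, α l i ∈ Set.Icc 0 (Real.pi / 2)) :
    ∀ S : List ℕ, S.Nodup → (∀ i ∈ S, 1 ≤ i ∧ i ≤ 2 ^ (ℓ - 1)) →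
    ∀ x : Fin (2 ^ L) → ℂ, PhaseOK (2 ^ L) x →
    (∀ u : Fin (2 ^ L), ¬ (2 ^ (L + 1 - ℓ) ∣ (u : ℕ)) → x u = 0) →
    PhaseOK (2 ^ L)
      ((S.map fun i => UsubN (2 ^ L) (pIdx L ℓ i) (qIdx L ℓ i) (α ℓ i)).prod.mulVec x)
    ∧ ∀ u : Fin (2 ^ L), (∀ i ∈ S, (u : ℕ) ≠ pIdx L ℓ i ∧ (u : ℕ) ≠ qIdx L ℓ i) →
        (S.map fun i => UsubN (2 ^ L) (pIdx L ℓ i) (qIdx L ℓ i) (α ℓ i)).prod.mulVec x u = x u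
  := by
  intro S
  induction S with
  | nil =>
    intro _ _ x hx hsupp
    constructor
    · simpa [Matrix.one_mulVec] using hx
    · intro u _; simp [Matrix.one_mulVec]
  | cons i₀ S' ih =>
    intro hnd hmem x hx hsupp
    have hnd' : S'.Nodup := (List.nodup_cons.mp hnd).2
    have hi₀S' : i₀ ∉ S' := (List.nodup_cons.mp hnd).1
    have hmem' : ∀ i ∈ S', 1 ≤ i ∧ i ≤ 2 ^ (ℓ - 1) := fun i hi => hmem i (List.mem_cons_of_mem _ hi)
    have hi₀ : 1 ≤ i₀ ∧ i₀ ≤ 2 ^ (ℓ - 1) := hmem i₀ (List.mem_cons_self)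
    obtain ⟨hIH1, hIH2⟩ := ih hnd' hmem' x hx hsupp
    set y' := (S'.map fun i => UsubN (2 ^ L) (pIdx L ℓ i) (qIdx L ℓ i) (α ℓ i)).prod.mulVec x
      with hy'
    set p := pIdx L ℓ i₀ with hp
    set q := qIdx L ℓ i₀ with hq
    have hqlt : q < 2 ^ L := qIdx_lt L ℓ i₀ hℓ hLℓ hi₀.1 hi₀.2
    have hs0 : 0 < 2 ^ (L - ℓ) := Nat.pow_pos (by norm_num)
    have hq' : q = p + 2 ^ (L - ℓ) := rfl
    have hplt : p < 2 ^ L := by omega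
    have hpq : p ≠ q := by omega
    have hstep : ∀ u : Fin (2 ^ L),
        ((i₀ :: S').map fun i => UsubN (2 ^ L) (pIdx L ℓ i) (qIdx L ℓ i) (α ℓ i)).prod.mulVec x u
        = (UsubN (2 ^ L) p q (α ℓ i₀)).mulVec y' u := by
      intro u
      rw [List.map_cons, List.prod_cons, ← Matrix.mulVec_mulVec]
    -- y' agrees with x at p and q
    have huntouched : ∀ w : ℕ, (w = p ∨ w = q) → ∀ i ∈ S', w ≠ pIdx L ℓ i ∧ w ≠ qIdx L ℓ i := by
      intro w hw i hiS'
      have hij : i₀ ≠ i := fun h => hi₀S' (h ▸ hiS')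
      have hd := pair_disjoint L ℓ hLℓ hi₀.1 (hmem' i hiS').1 hij
      rcases hw with h | h <;> subst h
      · exact ⟨hd.1, hd.2.1⟩
      · exact ⟨hd.2.2.1, hd.2.2.2⟩
    have hy'p : y' ⟨p, hplt⟩ = x ⟨p, hplt⟩ := hIH2 _ (huntouched p (Or.inl rfl))
    have hy'q : y' ⟨q, hqlt⟩ = x ⟨q, hqlt⟩ := hIH2 _ (huntouched q (Or.inr rfl))
    -- x vanishes at q
    have hsplit : L + 1 - ℓ = (L - ℓ) + 1 := by omega
    have hpform : p = (i₀ - 1) * 2 ^ ((L - ℓ) + 1) := by rw [hp]; unfold pIdx; rw [hsplit]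
    have hxq : x ⟨q, hqlt⟩ = 0 := by
      apply hsupp
      intro hdvd
      have hq'' : (⟨q, hqlt⟩ : Fin (2 ^ L)).1 = (i₀ - 1) * 2 ^ ((L - ℓ) + 1) + 2 ^ (L - ℓ) := by
        show q = _
        rw [hq', hpform]
      rw [hq''] at hdvd
      rw [hsplit] at hdvd
      have h1 : 2 ^ ((L - ℓ) + 1) ∣ (i₀ - 1) * 2 ^ ((L - ℓ) + 1) := dvd_mul_left _ _
      have h2 : 2 ^ ((L - ℓ) + 1) ∣ 2 ^ (L - ℓ) := (Nat.dvd_add_right h1).mp hdvd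
      have h3 : 2 ^ ((L - ℓ) + 1) ≤ 2 ^ (L - ℓ) := Nat.le_of_dvd hs0 h2
      have h4 : 2 ^ (L - ℓ) < 2 ^ ((L - ℓ) + 1) :=
        Nat.pow_lt_pow_right (by norm_num : 1 < 2) (Nat.lt_succ_self _)
      omega
    have hxq' : x ⟨q, hqlt⟩ = 0 := hxq
    -- nonnegativity of cos / sin
    have hβ := hα ℓ i₀
    have hcos : 0 ≤ Real.cos (α ℓ i₀) := by
      apply Real.cos_nonneg_of_mem_Icc
      constructor
      · linarith [hβ.1, Real.pi_pos]
      · exact hβ.2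
    have hsin : 0 ≤ Real.sin (α ℓ i₀) := by
      apply Real.sin_nonneg_of_nonneg_of_le_pi hβ.1
      linarith [hβ.2, Real.pi_pos]
    -- phase at p
    obtain ⟨t, ht0, htp⟩ := hx ⟨p, hplt⟩
    have hsumq : (Nat.digits 2 q).sum = (Nat.digits 2 p).sum + 1 := by
      have hq'' : q = (i₀ - 1) * 2 ^ ((L - ℓ) + 1) + 2 ^ (L - ℓ) := by rw [hq', hpform]
      rw [hq'', hpform, sumdig_step]
    constructor
    · intro u
      rw [hstep u, UsubN_mulVec hplt hqlt hpq]
      by_cases hu : (u : ℕ) = p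
      · rw [if_pos hu, hy'p, hy'q, hxq', htp]
        refine ⟨Real.cos (α ℓ i₀) * t, mul_nonneg hcos ht0, ?_⟩
        rw [hu]
        push_cast
        ring
      · by_cases hu2 : (u : ℕ) = q
        · rw [if_neg hu, if_pos hu2, hy'p, hy'q, hxq', htp]
          refine ⟨Real.sin (α ℓ i₀) * t, mul_nonneg hsin ht0, ?_⟩
          rw [hu2, hsumq]
          push_cast
          ring
        · rw [if_neg hu, if_neg hu2]
          exact hIH1 u
    · intro u hu
      have hup := (hu i₀ (List.mem_cons_self)).1
      have huq := (hu i₀ (List.mem_cons_self)).2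
      rw [hstep u, UsubN_mulVec hplt hqlt hpq, if_neg hup, if_neg huq]
      exact hIH2 u fun i hi => hu i (List.mem_cons_of_mem _ hi)

lemma layerU_eq_map (L ℓ : ℕ) (α : ℕ → ℕ → ℝ) :
    layerU L α ℓ =
      (((List.finRange (2 ^ (ℓ - 1))).map fun i : Fin (2 ^ (ℓ - 1)) => (i : ℕ) + 1).map
        fun i => UsubN (2 ^ L) (pIdx L ℓ i) (qIdx L ℓ i) (α ℓ i)).prod := by
  rw [layerU, List.map_map, List.ofFn_eq_map]
  rfl

lemma layers_upto (L : ℕ) (α : ℕ → ℕ → ℝ) (hα : ∀ l i, α l i ∈ Set.Icc 0 (Real.pi / 2)) :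
    ∀ k, k ≤ L →
    PhaseOK (2 ^ L)
      (((List.ofFn fun j : Fin k => layerU L α (k - (j : ℕ))).prod).mulVec (e1 (2 ^ L)))
    ∧ ∀ u : Fin (2 ^ L), ¬ (2 ^ (L - k) ∣ (u : ℕ)) →
      (((List.ofFn fun j : Fin k => layerU L α (k - (j : ℕ))).prod).mulVec (e1 (2 ^ L))) u = 0
  := by
  intro k
  induction k with
  | zero =>
    intro _
    constructor
    · intro u
      simp only [List.ofFn_zero, List.prod_nil, Matrix.one_mulVec]
      by_cases hu : (u : ℕ) = 0
      · exact ⟨1, zero_le_one, by simp [e1, hu]⟩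
      · exact ⟨0, le_refl 0, by simp [e1, hu]⟩
    · intro u hu
      simp only [List.ofFn_zero, List.prod_nil, Matrix.one_mulVec]
      have : (u : ℕ) ≠ 0 := by
        intro h; exact hu (by rw [h]; exact dvd_zero _)
      simp [e1, this]
  | succ k ihk =>
    intro hk1
    obtain ⟨ih1, ih2⟩ := ihk (by omega)
    set x := ((List.ofFn fun j : Fin k => layerU L α (k - (j : ℕ))).prod).mulVec (e1 (2 ^ L))
      with hx
    have hℓ : 1 ≤ k + 1 := by omega
    have hLℓ : k + 1 ≤ L := hk1
    -- rewrite the (k+1)-list product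
    have hlist : (List.ofFn fun j : Fin (k + 1) => layerU L α (k + 1 - (j : ℕ))) =
        layerU L α (k + 1) :: (List.ofFn fun j : Fin k => layerU L α (k - (j : ℕ))) := by
      rw [List.ofFn_succ]
      congr 1
      exact congrArg List.ofFn (funext fun j => by
        have h : k + 1 - ((j.succ : Fin (k + 1)) : ℕ) = k - (j : ℕ) := by
          simp only [Fin.val_succ]; omega
        rw [h])
    have hmv : ∀ u : Fin (2 ^ L),
        ((List.ofFn fun j : Fin (k + 1) => layerU L α (k + 1 - (j : ℕ))).prod).mulVec
          (e1 (2 ^ L)) u = (layerU L α (k + 1)).mulVec x u := by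
      intro u
      rw [hlist, List.prod_cons, ← Matrix.mulVec_mulVec]
    -- set up the S list
    set S : List ℕ := (List.finRange (2 ^ (k + 1 - 1))).map
        fun i : Fin (2 ^ (k + 1 - 1)) => (i : ℕ) + 1 with hS
    have hSnd : S.Nodup := by
      apply List.Nodup.map _ (List.nodup_finRange _)
      intro a b hab
      have hab' : (a : ℕ) + 1 = (b : ℕ) + 1 := hab
      exact Fin.ext (by omega)
    have hSmem : ∀ i ∈ S, 1 ≤ i ∧ i ≤ 2 ^ (k + 1 - 1) := by
      intro i hi
      rw [hS, List.mem_map] at hi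
      obtain ⟨j, _, hj⟩ := hi
      have hj' : (j : ℕ) + 1 = i := hj
      have := j.isLt
      omega
    have hsupp : ∀ u : Fin (2 ^ L), ¬ (2 ^ (L + 1 - (k + 1)) ∣ (u : ℕ)) → x u = 0 := by
      intro u hu
      apply ih2
      have : L + 1 - (k + 1) = L - k := by omega
      rwa [this] at hu
    obtain ⟨h1, h2⟩ := layer_list L (k + 1) hℓ hLℓ α hα S hSnd hSmem x ih1 hsupp
    have hlayer : layerU L α (k + 1) =
        (S.map fun i => UsubN (2 ^ L) (pIdx L (k + 1) i) (qIdx L (k + 1) i) (α (k + 1) i)).prod :=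
      layerU_eq_map L (k + 1) α
    constructor
    · intro u
      rw [hmv u, hlayer]
      exact h1 u
    · intro u hu
      rw [hmv u, hlayer]
      have hndvd : ¬ (2 ^ (L - k) ∣ (u : ℕ)) := by
        intro hd
        apply hu
        have hle : L - (k + 1) ≤ L - k := by omega
        exact dvd_trans (pow_dvd_pow 2 hle) hd
      have huntouched : ∀ i ∈ S, (u : ℕ) ≠ pIdx L (k + 1) i ∧ (u : ℕ) ≠ qIdx L (k + 1) i := by
        intro i hi
        have hdvd_p : 2 ^ (L - (k + 1)) ∣ pIdx L (k + 1) i := by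
          unfold pIdx
          exact Dvd.dvd.mul_left (pow_dvd_pow 2 (by omega)) _
        have hdvd_q : 2 ^ (L - (k + 1)) ∣ qIdx L (k + 1) i := by
          unfold qIdx
          exact dvd_add hdvd_p dvd_rfl
        constructor
        · intro he; exact hu (he ▸ hdvd_p)
        · intro he; exact hu (he ▸ hdvd_q)
      rw [h2 u huntouched]
      apply hsupp
      have : L + 1 - (k + 1) = L - k := by omega
      rw [this]
      exact hndvd

theorem magnitude_tree_phase_offsets (L : ℕ) (hL : 1 ≤ L) (α : ℕ → ℕ → ℝ)
    (hα : ∀ ℓ i, α ℓ i ∈ Set.Icc 0 (Real.pi / 2)) :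
    ∀ n : Fin (2 ^ L), ∃ t : ℝ, 0 ≤ t ∧
      (Vmag L α).mulVec (e1 (2 ^ L)) n =
        (t : ℂ) * Complex.I ^ ((Nat.digits 2 (n : ℕ)).sum) := by
  intro n
  have := (layers_upto L α hα L (le_refl L)).1 n
  rwa [Vmag]
end

section
/- Magnitude preservation of the tree: for N = 2^L and any unit-norm c ∈ ℂ^N, with split angles chosen by the subtree-norm rule α_{ℓ,i} = atan2(r_{ℓ+1,2i}, r_{ℓ+1,2i−1}), the vector y = V_mag(α) e₁ satisfies |y_n| = |c_n| for all n = 1,…,N. -/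
open Matrix Complex

/-- `atan2 y x` for `x, y ≥ 0` (angle in `[0, π/2]`), via the complex argument. -/
noncomputable def atan2 (y x : ℝ) : ℝ := Complex.arg ((x : ℂ) + (y : ℂ) * Complex.I)

/-- Subtree norm `r_{ℓ,i}` of `c ∈ ℂ^{2^L}` (0-based entries) over the contiguous
dyadic block of 0-based indices `[(i−1)·2^{L+1−ℓ}, i·2^{L+1−ℓ})` (1-based `ℓ, i`). -/
noncomputable def rnorm (L : ℕ) (c : Fin (2 ^ L) → ℂ) (ℓ i : ℕ) : ℝ :=
  Real.sqrt (∑ n : Fin (2 ^ L),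
    if (i - 1) * 2 ^ (L + 1 - ℓ) ≤ (n : ℕ) ∧ (n : ℕ) < i * 2 ^ (L + 1 - ℓ)
    then ‖c n‖ ^ 2 else 0)

/-- Split-programming rule: `α_{ℓ,i} = atan2(r_{ℓ+1,2i}, r_{ℓ+1,2i−1})`
(set to `0` when `r_{ℓ,i} = 0`). -/
noncomputable def splitAngle (L : ℕ) (c : Fin (2 ^ L) → ℂ) (ℓ i : ℕ) : ℝ :=
  if rnorm L c ℓ i = 0 then 0
  else atan2 (rnorm L c (ℓ + 1) (2 * i)) (rnorm L c (ℓ + 1) (2 * i - 1))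

/-- Output phase-bank rule: `ϑ_n = arg c_n − (π/2)·w_n`, where `w_n` is the Hamming
weight of the binary expansion of `n − 1` (0-based index `n`). -/
noncomputable def phaseChoice (L : ℕ) (c : Fin (2 ^ L) → ℂ) (n : Fin (2 ^ L)) : ℝ :=
  (c n).arg - Real.pi / 2 * ((Nat.digits 2 (n : ℕ)).sum : ℝ)


section MagAux

lemma UsubN_mulVec_ne {N m n : ℕ} {α : ℝ} (u : Fin N) (hm : (u:ℕ) ≠ m) (hn : (u:ℕ) ≠ n)
    (w : Fin N → ℂ) : (UsubN N m n α).mulVec w u = w u := by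
  unfold Matrix.mulVec dotProduct UsubN
  rw [Finset.sum_eq_single u]
  · simp [hm, hn]
  · intro v _ hv
    simp [hm, hn, (Ne.symm hv : u ≠ v)]
  · simp

lemma UsubN_mulVec_pair {N m n : ℕ} {α : ℝ} (hm : m < N) (hn : n < N) (hmn : m ≠ n)
    (w : Fin N → ℂ) (u : Fin N) :
    (UsubN N m n α).mulVec w u =
      if (u:ℕ) = m then (Real.cos α : ℂ) * w ⟨m, hm⟩ + Complex.I * Real.sin α * w ⟨n, hn⟩
      else if (u:ℕ) = n then Complex.I * Real.sin α * w ⟨m, hm⟩ + (Real.cos α : ℂ) * w ⟨n, hn⟩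
      else w u := by
  have hne : (⟨m, hm⟩ : Fin N) ≠ ⟨n, hn⟩ := by simp [Fin.ext_iff, hmn]
  have key : ∀ u : Fin N, (u:ℕ) = m ∨ (u:ℕ) = n →
      (UsubN N m n α).mulVec w u =
        UsubN N m n α u ⟨m, hm⟩ * w ⟨m, hm⟩ + UsubN N m n α u ⟨n, hn⟩ * w ⟨n, hn⟩ := by
    intro u hu
    have : (UsubN N m n α).mulVec w u = ∑ v, UsubN N m n α u v * w v := rfl
    rw [this]
    rw [show (Finset.univ : Finset (Fin N)) =
        {(⟨m,hm⟩ : Fin N), ⟨n,hn⟩} ∪ (Finset.univ \ {⟨m,hm⟩, ⟨n,hn⟩}) by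
      simp [Finset.union_sdiff_of_subset]]
    rw [Finset.sum_union Finset.disjoint_sdiff, Finset.sum_pair hne]
    rw [Finset.sum_eq_zero (fun v hv => by
      simp only [Finset.mem_sdiff, Finset.mem_insert, Finset.mem_singleton] at hv
      have h1 : (v:ℕ) ≠ m := fun h => hv.2 (Or.inl (Fin.ext h))
      have h2 : (v:ℕ) ≠ n := fun h => hv.2 (Or.inr (Fin.ext h))
      have h3 : u ≠ v := by
        rcases hu with h | h <;> exact fun he => by subst he; simp_all
      simp [UsubN, h1, h2, h3]), add_zero]
  by_cases h1 : (u:ℕ) = m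
  · rw [key u (Or.inl h1), if_pos h1]
    have e1 : UsubN N m n α u ⟨m, hm⟩ = (Real.cos α : ℂ) := by simp [UsubN, h1]
    have e2 : UsubN N m n α u ⟨n, hn⟩ = Complex.I * Real.sin α := by
      simp [UsubN, h1, hmn, Ne.symm hmn]
    rw [e1, e2]
  · rw [if_neg h1]
    by_cases h2 : (u:ℕ) = n
    · rw [key u (Or.inr h2), if_pos h2]
      have e1 : UsubN N m n α u ⟨m, hm⟩ = Complex.I * Real.sin α := by
        simp [UsubN, h1, h2, hmn, Ne.symm hmn]
      have e2 : UsubN N m n α u ⟨n, hn⟩ = (Real.cos α : ℂ) := by simp [UsubN, h2]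
      rw [e1, e2]
    · rw [if_neg h2]
      exact UsubN_mulVec_ne u h1 h2 w

noncomputable def splProd (N : ℕ) (l : List (ℕ × ℕ × ℝ)) : Matrix (Fin N) (Fin N) ℂ :=
  (l.map fun t => UsubN N t.1 t.2.1 t.2.2).prod

def disjT (s t : ℕ × ℕ × ℝ) : Prop :=
  s.1 ≠ t.1 ∧ s.1 ≠ t.2.1 ∧ s.2.1 ≠ t.1 ∧ s.2.1 ≠ t.2.1

lemma splProd_mulVec_ne (N : ℕ) :
    ∀ (l : List (ℕ × ℕ × ℝ)) (u : Fin N),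
      (∀ t ∈ l, (u:ℕ) ≠ t.1 ∧ (u:ℕ) ≠ t.2.1) → ∀ (w : Fin N → ℂ),
      (splProd N l).mulVec w u = w u := by
  intro l
  induction l with
  | nil => intro u _ w; simp [splProd, Matrix.one_mulVec]
  | cons t l ih =>
    intro u h w
    have ht := h t (List.mem_cons_self ..)
    simp only [splProd, List.map_cons, List.prod_cons]
    rw [← Matrix.mulVec_mulVec, UsubN_mulVec_ne u ht.1 ht.2]
    exact ih u (fun s hs => h s (List.mem_cons_of_mem _ hs)) w

lemma splProd_mulVec_mem (N : ℕ) :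
    ∀ (l : List (ℕ × ℕ × ℝ)), List.Pairwise disjT l →
      (∀ s ∈ l, s.1 < N ∧ s.2.1 < N ∧ s.1 ≠ s.2.1) →
      ∀ t ∈ l, ∀ (u : Fin N), (u:ℕ) = t.1 ∨ (u:ℕ) = t.2.1 → ∀ (w : Fin N → ℂ),
      (splProd N l).mulVec w u = (UsubN N t.1 t.2.1 t.2.2).mulVec w u := by
  intro l
  induction l with
  | nil => intro _ _ t ht; cases ht
  | cons s l ih =>
    intro hp hb t ht u hu w
    obtain ⟨hs1, hs2, hs3⟩ := hb s (List.mem_cons_self ..)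
    simp only [splProd, List.map_cons, List.prod_cons]
    rw [← Matrix.mulVec_mulVec]
    rcases List.mem_cons.mp ht with rfl | htl
    · have hrest : ∀ (v : Fin N), ((v:ℕ) = t.1 ∨ (v:ℕ) = t.2.1) →
          (splProd N l).mulVec w v = w v := by
        intro v hv
        refine splProd_mulVec_ne N l v (fun s' hs' => ?_) w
        have hd := (List.pairwise_cons.mp hp).1 s' hs'
        rcases hv with h | h <;> rw [h]
        · exact ⟨hd.1, hd.2.1⟩
        · exact ⟨hd.2.2.1, hd.2.2.2⟩
      rw [show ((l.map fun t => UsubN N t.1 t.2.1 t.2.2).prod) = splProd N l from rfl]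
      rw [UsubN_mulVec_pair hs1 hs2 hs3, UsubN_mulVec_pair hs1 hs2 hs3 w u]
      rw [hrest ⟨t.1, hs1⟩ (Or.inl rfl), hrest ⟨t.2.1, hs2⟩ (Or.inr rfl)]
      rcases hu with h | h
      · rw [if_pos h, if_pos h]
      · by_cases h' : (u:ℕ) = t.1
        · rw [if_pos h', if_pos h']
        · rw [if_neg h', if_neg h', if_pos h, if_pos h]
    · have hd := List.rel_of_pairwise_cons hp htl
      have h1 : (u:ℕ) ≠ s.1 := by
        rcases hu with h | h <;> rw [h]
        · exact Ne.symm hd.1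
        · exact Ne.symm hd.2.1
      have h2 : (u:ℕ) ≠ s.2.1 := by
        rcases hu with h | h <;> rw [h]
        · exact Ne.symm hd.2.2.1
        · exact Ne.symm hd.2.2.2
      rw [UsubN_mulVec_ne u h1 h2]
      exact ih (List.pairwise_cons.mp hp).2 (fun s' hs' => hb s' (List.mem_cons_of_mem _ hs'))
        t htl u hu w

lemma rnorm_nonneg (L : ℕ) (c : Fin (2 ^ L) → ℂ) (ℓ i : ℕ) : 0 ≤ rnorm L c ℓ i :=
  Real.sqrt_nonneg _

lemma sum_block_nonneg (L : ℕ) (c : Fin (2 ^ L) → ℂ) (ℓ i : ℕ) :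
    0 ≤ ∑ n : Fin (2 ^ L),
      if (i - 1) * 2 ^ (L + 1 - ℓ) ≤ (n : ℕ) ∧ (n : ℕ) < i * 2 ^ (L + 1 - ℓ)
      then ‖c n‖ ^ 2 else 0 :=
  Finset.sum_nonneg fun n _ => by positivity

lemma rnorm_sq (L : ℕ) (c : Fin (2 ^ L) → ℂ) (ℓ i : ℕ) :
    rnorm L c ℓ i ^ 2 = ∑ n : Fin (2 ^ L),
      if (i - 1) * 2 ^ (L + 1 - ℓ) ≤ (n : ℕ) ∧ (n : ℕ) < i * 2 ^ (L + 1 - ℓ)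
      then ‖c n‖ ^ 2 else 0 :=
  Real.sq_sqrt (sum_block_nonneg L c ℓ i)

lemma rnorm_root (L : ℕ) (c : Fin (2 ^ L) → ℂ) (hc : ∑ n, ‖c n‖ ^ 2 = 1) :
    rnorm L c 1 1 = 1 := by
  unfold rnorm
  have h : ∀ n : Fin (2 ^ L),
      (if (1 - 1) * 2 ^ (L + 1 - 1) ≤ (n : ℕ) ∧ (n : ℕ) < 1 * 2 ^ (L + 1 - 1)
       then ‖c n‖ ^ 2 else 0) = ‖c n‖ ^ 2 := by
    intro n
    rw [if_pos]
    refine ⟨by omega, ?_⟩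
    have := n.isLt
    have h : L + 1 - 1 = L := by omega
    rw [h]; omega
  rw [Finset.sum_congr rfl (fun n _ => h n), hc, Real.sqrt_one]

lemma rnorm_leaf (L : ℕ) (c : Fin (2 ^ L) → ℂ) (n : Fin (2 ^ L)) :
    rnorm L c (L + 1) ((n : ℕ) + 1) = ‖c n‖ := by
  unfold rnorm
  have he : L + 1 - (L + 1) = 0 := by omega
  have h : ∀ m : Fin (2 ^ L),
      (if ((n:ℕ) + 1 - 1) * 2 ^ (L + 1 - (L + 1)) ≤ (m : ℕ) ∧
          (m : ℕ) < ((n:ℕ) + 1) * 2 ^ (L + 1 - (L + 1))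
       then ‖c m‖ ^ 2 else 0) = if m = n then ‖c m‖ ^ 2 else 0 := by
    intro m
    rw [he]
    simp only [pow_zero, mul_one]
    congr 1
    simp only [eq_iff_iff]
    constructor
    · intro h; exact Fin.ext (by omega)
    · intro h; subst h; omega
  rw [Finset.sum_congr rfl (fun m _ => h m),
    Finset.sum_ite_eq' Finset.univ n (fun m => ‖c m‖ ^ 2)]
  simp [Real.sqrt_sq (norm_nonneg _)]

lemma rnorm_split (L : ℕ) (c : Fin (2 ^ L) → ℂ) (ℓ j : ℕ) (hℓ : ℓ + 1 ≤ L) :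
    rnorm L c (ℓ + 1) (j + 1) ^ 2 =
      rnorm L c (ℓ + 2) (2 * (j + 1) - 1) ^ 2 + rnorm L c (ℓ + 2) (2 * (j + 1)) ^ 2 := by
  rw [rnorm_sq, rnorm_sq, rnorm_sq, ← Finset.sum_add_distrib]
  refine Finset.sum_congr rfl fun n _ => ?_
  have e1 : L + 1 - (ℓ + 1) = (L - ℓ - 1) + 1 := by omega
  have e2 : L + 1 - (ℓ + 2) = L - ℓ - 1 := by omega
  rw [e1, e2, pow_succ]
  set D := 2 ^ (L - ℓ - 1) with hD
  have hA : (j + 1 - 1) * (D * 2) = 2 * (j * D) + 0 := by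
    rw [Nat.add_sub_cancel]; ring
  have hB : (j + 1) * (D * 2) = 2 * (j * D) + 2 * D := by ring
  have hC : (2 * (j + 1) - 1 - 1) * D = 2 * (j * D) := by
    have : 2 * (j + 1) - 1 - 1 = 2 * j := by omega
    rw [this]; ring
  have hE : (2 * (j + 1) - 1) * D = 2 * (j * D) + D := by
    have : 2 * (j + 1) - 1 = 2 * j + 1 := by omega
    rw [this]; ring
  have hF : 2 * (j + 1) * D = 2 * (j * D) + 2 * D := by ring
  rw [hA, hB, hC, hE, hF]
  set t := j * D with ht
  clear_value t
  clear_value D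
  clear ht hD hA hB hC hE hF e1 e2
  split_ifs <;> first | ring1 | omega

lemma cos_sin_splitAngle (L : ℕ) (c : Fin (2 ^ L) → ℂ) (ℓ j : ℕ) (hℓ : ℓ + 1 ≤ L) :
    Real.cos (splitAngle L c (ℓ + 1) (j + 1)) * rnorm L c (ℓ + 1) (j + 1)
      = rnorm L c (ℓ + 2) (2 * (j + 1) - 1) ∧
    Real.sin (splitAngle L c (ℓ + 1) (j + 1)) * rnorm L c (ℓ + 1) (j + 1)
      = rnorm L c (ℓ + 2) (2 * (j + 1)) := by
  set r := rnorm L c (ℓ + 1) (j + 1) with hr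
  set a := rnorm L c (ℓ + 2) (2 * (j + 1) - 1) with ha
  set b := rnorm L c (ℓ + 2) (2 * (j + 1)) with hb
  have hsq : r ^ 2 = a ^ 2 + b ^ 2 := rnorm_split L c ℓ j hℓ
  have ha0 : 0 ≤ a := rnorm_nonneg ..
  have hb0 : 0 ≤ b := rnorm_nonneg ..
  have hr0 : 0 ≤ r := rnorm_nonneg ..
  by_cases h : r = 0
  · have hz : a ^ 2 + b ^ 2 = 0 := by rw [← hsq, h]; ring
    have haz : a = 0 := by nlinarith
    have hbz : b = 0 := by nlinarith
    have hα : splitAngle L c (ℓ + 1) (j + 1) = 0 := by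
      rw [splitAngle, if_pos (by rw [← hr]; exact h)]
    refine ⟨?_, ?_⟩
    · rw [hα, h, haz]; simp
    · rw [hα, h, hbz]; simp
  · have hα : splitAngle L c (ℓ + 1) (j + 1) = Complex.arg ((a : ℂ) + (b : ℂ) * Complex.I) := by
      rw [splitAngle, if_neg (by rw [← hr]; exact h)]
      have e : ℓ + 1 + 1 = ℓ + 2 := by omega
      rw [atan2, e, ← ha, ← hb]
    have habs : ‖(a : ℂ) + (b : ℂ) * Complex.I‖ = r := by
      rw [Complex.norm_add_mul_I, ← hsq, Real.sqrt_sq hr0]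
    have hzz : ((a : ℂ) + (b : ℂ) * Complex.I) ≠ 0 := by
      intro hzz
      rw [hzz] at habs
      simp at habs
      exact h habs.symm
    constructor
    · rw [hα, Complex.cos_arg hzz, habs]
      simp [div_mul_cancel₀, h]
    · rw [hα, Complex.sin_arg, habs]
      simp [div_mul_cancel₀, h]

noncomputable def layerList (L : ℕ) (α : ℕ → ℕ → ℝ) (ℓ : ℕ) : List (ℕ × ℕ × ℝ) :=
  List.ofFn fun i : Fin (2 ^ (ℓ - 1)) =>
    (pIdx L ℓ ((i:ℕ) + 1), qIdx L ℓ ((i:ℕ) + 1), α ℓ ((i:ℕ) + 1))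

lemma layerU_eq (L : ℕ) (α : ℕ → ℕ → ℝ) (ℓ : ℕ) :
    layerU L α ℓ = splProd (2 ^ L) (layerList L α ℓ) := by
  unfold layerU splProd layerList
  rw [List.map_ofFn]
  rfl

lemma pIdx_eq (L ℓ j : ℕ) (hℓ : ℓ + 1 ≤ L) :
    pIdx L (ℓ + 1) (j + 1) = j * (2 * 2 ^ (L - ℓ - 1)) := by
  unfold pIdx
  have e : L + 1 - (ℓ + 1) = (L - ℓ - 1) + 1 := by omega
  rw [Nat.add_sub_cancel, e, pow_succ]
  ring

lemma qIdx_eq (L ℓ j : ℕ) (hℓ : ℓ + 1 ≤ L) :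
    qIdx L (ℓ + 1) (j + 1) = j * (2 * 2 ^ (L - ℓ - 1)) + 2 ^ (L - ℓ - 1) := by
  unfold qIdx
  rw [pIdx_eq L ℓ j hℓ, show L - (ℓ + 1) = L - ℓ - 1 from by omega]

lemma twoL_eq (L ℓ : ℕ) (hℓ : ℓ + 1 ≤ L) :
    2 ^ L = 2 ^ ℓ * (2 * 2 ^ (L - ℓ - 1)) := by
  rw [show 2 * 2 ^ (L - ℓ - 1) = 2 ^ (L - ℓ - 1 + 1) from (pow_succ' 2 _).symm, ← pow_add]
  congr 1
  omega

lemma layerList_bounds (L : ℕ) (α : ℕ → ℕ → ℝ) (ℓ : ℕ) (hℓ : ℓ + 1 ≤ L) :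
    ∀ s ∈ layerList L α (ℓ + 1), s.1 < 2 ^ L ∧ s.2.1 < 2 ^ L ∧ s.1 ≠ s.2.1 := by
  intro s hs
  rw [layerList, List.mem_ofFn] at hs
  obtain ⟨i, rfl⟩ := hs
  have hi : (i : ℕ) < 2 ^ ℓ := by
    have := i.isLt
    simpa using this
  have hE : 0 < 2 ^ (L - ℓ - 1) := Nat.pow_pos (by norm_num)
  have hp := pIdx_eq L ℓ (i:ℕ) hℓ
  have hq := qIdx_eq L ℓ (i:ℕ) hℓ
  have h2L := twoL_eq L ℓ hℓ
  have hmul : ((i:ℕ) + 1) * (2 * 2 ^ (L - ℓ - 1)) ≤ 2 ^ ℓ * (2 * 2 ^ (L - ℓ - 1)) :=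
    Nat.mul_le_mul_right _ hi
  have hadd : ((i:ℕ) + 1) * (2 * 2 ^ (L - ℓ - 1))
      = (i:ℕ) * (2 * 2 ^ (L - ℓ - 1)) + 2 * 2 ^ (L - ℓ - 1) := by ring
  rw [hadd] at hmul
  refine ⟨?_, ?_, ?_⟩ <;> simp only [hp, hq, h2L]
  · omega
  · omega
  · omega

lemma layerList_pairwise (L : ℕ) (α : ℕ → ℕ → ℝ) (ℓ : ℕ) (hℓ : ℓ + 1 ≤ L) :
    List.Pairwise disjT (layerList L α (ℓ + 1)) := by
  rw [layerList, List.pairwise_ofFn]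
  intro i j hij
  have hE : 0 < 2 ^ (L - ℓ - 1) := Nat.pow_pos (by norm_num)
  have hp1 := pIdx_eq L ℓ (i:ℕ) hℓ
  have hq1 := qIdx_eq L ℓ (i:ℕ) hℓ
  have hp2 := pIdx_eq L ℓ (j:ℕ) hℓ
  have hq2 := qIdx_eq L ℓ (j:ℕ) hℓ
  have hij' : (i:ℕ) + 1 ≤ (j:ℕ) := hij
  have hmul : ((i:ℕ) + 1) * (2 * 2 ^ (L - ℓ - 1)) ≤ (j:ℕ) * (2 * 2 ^ (L - ℓ - 1)) :=
    Nat.mul_le_mul_right _ hij'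
  have hadd : ((i:ℕ) + 1) * (2 * 2 ^ (L - ℓ - 1))
      = (i:ℕ) * (2 * 2 ^ (L - ℓ - 1)) + 2 * 2 ^ (L - ℓ - 1) := by ring
  rw [hadd] at hmul
  refine ⟨?_, ?_, ?_, ?_⟩ <;> simp only [hp1, hq1, hp2, hq2] <;> omega

noncomputable def vIter (L : ℕ) (α : ℕ → ℕ → ℝ) : ℕ → Fin (2 ^ L) → ℂ
  | 0 => e1 (2 ^ L)
  | (ℓ + 1) => (layerU L α (ℓ + 1)).mulVec (vIter L α ℓ)

lemma prodVmag (L : ℕ) (α : ℕ → ℕ → ℝ) :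
    ∀ k : ℕ, ((List.ofFn fun ℓ : Fin k => layerU L α (k - (ℓ:ℕ))).prod).mulVec (e1 (2 ^ L))
      = vIter L α k := by
  intro k
  induction k with
  | zero => simp [Matrix.one_mulVec, vIter]
  | succ k ih =>
    rw [List.ofFn_succ]
    simp only [Fin.val_succ, Fin.val_zero, Nat.sub_zero]
    rw [List.prod_cons, ← Matrix.mulVec_mulVec]
    rw [show (List.ofFn fun i : Fin k => layerU L α (k + 1 - ((i:ℕ) + 1)))
        = (List.ofFn fun i : Fin k => layerU L α (k - (i:ℕ))) from
      congrArg _ (funext fun i => by rw [show k + 1 - ((i:ℕ) + 1) = k - (i:ℕ) from by omega])]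
    rw [ih]
    rfl

lemma vIter_norm (L : ℕ) (c : Fin (2 ^ L) → ℂ) (hc : ∑ n, ‖c n‖ ^ 2 = 1) :
    ∀ ℓ : ℕ, ℓ ≤ L → ∀ u : Fin (2 ^ L),
      ‖vIter L (splitAngle L c) ℓ u‖ =
        if 2 ^ (L - ℓ) ∣ (u:ℕ) then rnorm L c (ℓ + 1) ((u:ℕ) / 2 ^ (L - ℓ) + 1) else 0 := by
  intro ℓ
  induction ℓ with
  | zero =>
    intro _ u
    by_cases h : 2 ^ (L - 0) ∣ (u:ℕ)
    · have hu : (u:ℕ) = 0 := by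
        have h2 := u.isLt
        simp only [Nat.sub_zero] at h
        rcases Nat.eq_zero_or_pos (u:ℕ) with h0 | h0
        · exact h0
        · exact absurd (Nat.le_of_dvd h0 h) (by omega)
      rw [if_pos h, hu, Nat.zero_div]
      have h1 : ‖vIter L (splitAngle L c) 0 u‖ = 1 := by simp [vIter, e1, hu]
      rw [h1]
      exact (by simpa using (rnorm_root L c hc).symm)
    · have hu0 : (u:ℕ) ≠ 0 := fun h0 => h (by rw [h0]; exact dvd_zero _)
      rw [if_neg h]
      simp [vIter, e1, hu0]
  | succ ℓ ih =>
    intro hℓ u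
    have hih := ih (by omega)
    have hE : 0 < 2 ^ (L - ℓ - 1) := Nat.pow_pos (by norm_num)
    have hLL : L - (ℓ + 1) = L - ℓ - 1 := by omega
    have h2E : 2 ^ (L - ℓ) = 2 * 2 ^ (L - ℓ - 1) := by
      rw [← pow_succ']
      congr 1
      omega
    have hstep : vIter L (splitAngle L c) (ℓ + 1)
        = (splProd (2 ^ L) (layerList L (splitAngle L c) (ℓ + 1))).mulVec
            (vIter L (splitAngle L c) ℓ) := by
      rw [show vIter L (splitAngle L c) (ℓ + 1)
          = (layerU L (splitAngle L c) (ℓ + 1)).mulVec (vIter L (splitAngle L c) ℓ) from rfl,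
        layerU_eq]
    rw [hstep]
    set E := 2 ^ (L - ℓ - 1) with hEdef
    set w := vIter L (splitAngle L c) ℓ with hw
    have h2L' : 2 ^ L = 2 ^ (ℓ + 1) * E := by
      rw [hEdef, ← pow_add]
      congr 1
      omega
    by_cases hdvd : 2 ^ (L - (ℓ + 1)) ∣ (u:ℕ)
    · rw [hLL, ← hEdef] at hdvd
      obtain ⟨k, hk⟩ := hdvd
      have hdd : 2 ^ (L - (ℓ + 1)) ∣ (u:ℕ) := by
        rw [hLL, ← hEdef]
        exact ⟨k, hk⟩
      have hkb : k < 2 ^ (ℓ + 1) := by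
        have hu : E * k < 2 ^ (ℓ + 1) * E := by
          rw [← hk, ← h2L']
          exact u.isLt
        exact Nat.lt_of_mul_lt_mul_left (hu.trans_eq (mul_comm _ _))
      have hcs := cos_sin_splitAngle L c ℓ
      rcases Nat.even_or_odd k with ⟨j, hj⟩ | ⟨j, hj⟩
      · -- u = p-index of splitter j
        have hjb : j < 2 ^ ℓ := by
          have : 2 ^ (ℓ + 1) = 2 * 2 ^ ℓ := by rw [pow_succ]; ring
          omega
        have hup : (u:ℕ) = pIdx L (ℓ + 1) (j + 1) := by
          rw [pIdx_eq L ℓ j hℓ, ← hEdef, hk, hj]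
          ring
        have hmem : (pIdx L (ℓ + 1) (j + 1), qIdx L (ℓ + 1) (j + 1),
            splitAngle L c (ℓ + 1) (j + 1)) ∈ layerList L (splitAngle L c) (ℓ + 1) := by
          rw [layerList, List.mem_ofFn]
          exact ⟨⟨j, by simpa using hjb⟩, rfl⟩
        have hb := layerList_bounds L (splitAngle L c) ℓ hℓ
        obtain ⟨hm, hn, hmn⟩ := hb _ hmem
        rw [splProd_mulVec_mem (2 ^ L) _ (layerList_pairwise L (splitAngle L c) ℓ hℓ) hb
          _ hmem u (Or.inl hup) w]
        rw [UsubN_mulVec_pair hm hn hmn w u, if_pos hup]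
        have hq := qIdx_eq L ℓ j hℓ
        have hp := pIdx_eq L ℓ j hℓ
        have hqz : w ⟨qIdx L (ℓ + 1) (j + 1), hn⟩ = 0 := by
          rw [← norm_eq_zero, hih, if_neg]
          show ¬ 2 ^ (L - ℓ) ∣ qIdx L (ℓ + 1) (j + 1)
          rw [h2E, hq, ← hEdef]
          intro hcon
          have h1 : 2 * E ∣ E := (Nat.dvd_add_right ⟨j, by ring⟩).mp hcon
          have := Nat.le_of_dvd hE h1
          omega
        have hpnorm : ‖w ⟨pIdx L (ℓ + 1) (j + 1), hm⟩‖ = rnorm L c (ℓ + 1) (j + 1) := by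
          rw [hih]
          have hdv : 2 ^ (L - ℓ) ∣ (⟨pIdx L (ℓ + 1) (j + 1), hm⟩ : Fin (2 ^ L)).val := by
            show 2 ^ (L - ℓ) ∣ pIdx L (ℓ + 1) (j + 1)
            rw [h2E, hp, ← hEdef]
            exact ⟨j, by ring⟩
          rw [if_pos hdv]
          congr 2
          show pIdx L (ℓ + 1) (j + 1) / 2 ^ (L - ℓ) = j
          rw [h2E, hp, ← hEdef]
          exact Nat.mul_div_cancel _ (by omega)
        rw [hqz, mul_zero, add_zero, norm_mul, hpnorm]
        have h1 : ‖(Real.cos (splitAngle L c (ℓ + 1) (j + 1)) : ℂ)‖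
            = |Real.cos (splitAngle L c (ℓ + 1) (j + 1))| := by
          rw [Complex.norm_real, Real.norm_eq_abs]
        rw [h1, ← _root_.abs_of_nonneg (rnorm_nonneg L c (ℓ + 1) (j + 1)), ← abs_mul,
          (hcs j hℓ).1, _root_.abs_of_nonneg (rnorm_nonneg L c (ℓ + 2) (2 * (j + 1) - 1))]
        rw [if_pos hdd]
        have harg : (u:ℕ) / 2 ^ (L - (ℓ + 1)) + 1 = 2 * (j + 1) - 1 := by
          rw [hLL, ← hEdef, hk, Nat.mul_div_cancel_left _ (by omega)]
          omega
        rw [harg]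
      · -- u = q-index of splitter j
        have hjb : j < 2 ^ ℓ := by
          have : 2 ^ (ℓ + 1) = 2 * 2 ^ ℓ := by rw [pow_succ]; ring
          omega
        have huq : (u:ℕ) = qIdx L (ℓ + 1) (j + 1) := by
          rw [qIdx_eq L ℓ j hℓ, ← hEdef, hk, hj]
          ring
        have hmem : (pIdx L (ℓ + 1) (j + 1), qIdx L (ℓ + 1) (j + 1),
            splitAngle L c (ℓ + 1) (j + 1)) ∈ layerList L (splitAngle L c) (ℓ + 1) := by
          rw [layerList, List.mem_ofFn]
          exact ⟨⟨j, by simpa using hjb⟩, rfl⟩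
        have hb := layerList_bounds L (splitAngle L c) ℓ hℓ
        obtain ⟨hm, hn, hmn⟩ := hb _ hmem
        rw [splProd_mulVec_mem (2 ^ L) _ (layerList_pairwise L (splitAngle L c) ℓ hℓ) hb
          _ hmem u (Or.inr huq) w]
        rw [UsubN_mulVec_pair hm hn hmn w u]
        rw [if_neg (by rw [huq]; exact Ne.symm hmn), if_pos huq]
        have hq := qIdx_eq L ℓ j hℓ
        have hp := pIdx_eq L ℓ j hℓ
        have hqz : w ⟨qIdx L (ℓ + 1) (j + 1), hn⟩ = 0 := by
          rw [← norm_eq_zero, hih, if_neg]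
          show ¬ 2 ^ (L - ℓ) ∣ qIdx L (ℓ + 1) (j + 1)
          rw [h2E, hq, ← hEdef]
          intro hcon
          have h1 : 2 * E ∣ E := (Nat.dvd_add_right ⟨j, by ring⟩).mp hcon
          have := Nat.le_of_dvd hE h1
          omega
        have hpnorm : ‖w ⟨pIdx L (ℓ + 1) (j + 1), hm⟩‖ = rnorm L c (ℓ + 1) (j + 1) := by
          rw [hih]
          have hdv : 2 ^ (L - ℓ) ∣ (⟨pIdx L (ℓ + 1) (j + 1), hm⟩ : Fin (2 ^ L)).val := by
            show 2 ^ (L - ℓ) ∣ pIdx L (ℓ + 1) (j + 1)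
            rw [h2E, hp, ← hEdef]
            exact ⟨j, by ring⟩
          rw [if_pos hdv]
          congr 2
          show pIdx L (ℓ + 1) (j + 1) / 2 ^ (L - ℓ) = j
          rw [h2E, hp, ← hEdef]
          exact Nat.mul_div_cancel _ (by omega)
        rw [hqz, mul_zero, add_zero, norm_mul, norm_mul, hpnorm]
        have h1 : ‖(Real.sin (splitAngle L c (ℓ + 1) (j + 1)) : ℂ)‖
            = |Real.sin (splitAngle L c (ℓ + 1) (j + 1))| := by
          rw [Complex.norm_real, Real.norm_eq_abs]
        rw [Complex.norm_I, one_mul, h1,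
          ← _root_.abs_of_nonneg (rnorm_nonneg L c (ℓ + 1) (j + 1)), ← abs_mul,
          (hcs j hℓ).2, _root_.abs_of_nonneg (rnorm_nonneg L c (ℓ + 2) (2 * (j + 1)))]
        rw [if_pos hdd]
        have harg : (u:ℕ) / 2 ^ (L - (ℓ + 1)) + 1 = 2 * (j + 1) := by
          rw [hLL, ← hEdef, hk, Nat.mul_div_cancel_left _ (by omega)]
          omega
        rw [harg]
    · -- u not in any support
      have hnm : ∀ t ∈ layerList L (splitAngle L c) (ℓ + 1),
          (u:ℕ) ≠ t.1 ∧ (u:ℕ) ≠ t.2.1 := by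
        intro t ht
        rw [layerList, List.mem_ofFn] at ht
        obtain ⟨i, rfl⟩ := ht
        have hp := pIdx_eq L ℓ (i:ℕ) hℓ
        have hq := qIdx_eq L ℓ (i:ℕ) hℓ
        rw [hLL, ← hEdef] at hdvd
        constructor
        · intro hcon
          refine hdvd ?_
          rw [hcon]
          show E ∣ pIdx L (ℓ + 1) ((i:ℕ) + 1)
          rw [hp, ← hEdef]
          exact ⟨(i:ℕ) * 2, by ring⟩
        · intro hcon
          refine hdvd ?_
          rw [hcon]
          show E ∣ qIdx L (ℓ + 1) ((i:ℕ) + 1)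
          rw [hq, ← hEdef]
          exact ⟨(i:ℕ) * 2 + 1, by ring⟩
      rw [splProd_mulVec_ne (2 ^ L) _ u hnm w]
      rw [hih u, if_neg, if_neg hdvd]
      intro hcon
      rw [hLL, ← hEdef] at hdvd
      rw [h2E] at hcon
      exact hdvd (dvd_trans ⟨2, by ring⟩ hcon)

end MagAux

theorem magnitude_preservation (L : ℕ) (hL : 1 ≤ L) (c : Fin (2 ^ L) → ℂ)
    (hc : ∑ n, ‖c n‖ ^ 2 = 1) :
    ∀ n : Fin (2 ^ L),
      ‖(Vmag L (splitAngle L c)).mulVec (e1 (2 ^ L)) n‖ = ‖c n‖ := by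
  intro n
  rw [Vmag, prodVmag L (splitAngle L c) L]
  rw [vIter_norm L c hc L le_rfl n]
  rw [if_pos (by simp [Nat.sub_self] : 2 ^ (L - L) ∣ (n:ℕ))]
  rw [show (n:ℕ) / 2 ^ (L - L) + 1 = (n:ℕ) + 1 from by simp [Nat.sub_self]]
  exact rnorm_leaf L c n
end
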